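/- arXiv:1508.00551 — 4 statements merged into one kernel-verified Lean document; each statement's English description precedes it below -/
import Mathlib

section
/- Let p(x) = xⁿ + a_{n-1}x^{n-1} + … + a₀ be a monic polynomial over ℂ with a multiple root x₀ of multiplicity m ≥ 2, and let δp(x) = b_{n-1}x^{n-1} + … + b₀ satisfy δp(x₀) = 0. Then D(a₀,…,a_{n-1}) = 0 and Σ_{i=0}^{n-1} (∂D/∂aᵢ)(a₀,…,a_{n-1})·bᵢ = 0, where D is the discriminant of the generic monic degree-n polynomial as a polynomial in its coefficients. -/
open Polynomial Finset

lemma aux_hasDerivAt (n : ℕ) (a b : Fin n → ℂ) (D : MvPolynomial (Fin n) ℂ) :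
    HasDerivAt (fun t : ℂ => MvPolynomial.eval (fun i => a i + t * b i) D)
      (∑ i : Fin n, MvPolynomial.eval a (MvPolynomial.pderiv i D) * b i) 0 := by
  induction D using MvPolynomial.induction_on with
  | C c => simpa using hasDerivAt_const (0:ℂ) c
  | add p q hp hq =>
      have := hp.fun_add hq
      simpa [Finset.sum_add_distrib, add_mul] using this
  | mul_X p i hp =>
      have h1 : HasDerivAt (fun t : ℂ => a i + t * b i) (b i) 0 := by
        simpa using ((hasDerivAt_id (0:ℂ)).mul_const (b i)).const_add (a i)
      have h2 : HasDerivAt (fun t : ℂ => MvPolynomial.eval (fun i => a i + t * b i) p * (a i + t * b i)) _ 0 :=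
        hp.fun_mul h1
      have e0 : (fun i => a i + (0:ℂ) * b i) = a := by funext j; ring
      rw [e0] at h2
      convert h2 using 1
      · funext t; simp
      · simp only [MvPolynomial.pderiv_mul, MvPolynomial.eval_add, MvPolynomial.eval_mul,
          MvPolynomial.eval_X, add_mul, Finset.sum_add_distrib]
        congr 1
        · rw [Finset.sum_mul]; simp only [zero_mul, add_zero]
          exact Finset.sum_congr rfl fun j _ => by ring
        · rw [Finset.sum_eq_single i]
          · simp
          · intro j _ hj
            rw [MvPolynomial.pderiv_X_of_ne (Ne.symm hj)]
            simp
          · simp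

lemma aux_enum {k : ℕ} {g : Polynomial ℂ} (hg : g.Monic) (hdeg : g.natDegree = k) :
    ∃ y : Fin k → ℂ, g = ∏ i : Fin k, (X - C (y i)) := by
  have hsplit : g.Splits := IsAlgClosed.splits g
  have hcard : g.roots.card = k := by
    rw [← hdeg]; exact (splits_iff_card_roots.mp hsplit)
  have hprod := hsplit.eq_prod_roots_of_monic hg
  set l := g.roots.toList with hl
  have hlen : l.length = k := by rw [hl, Multiset.length_toList, hcard]
  refine ⟨fun i => l.get (Fin.cast hlen.symm i), ?_⟩
  calc g = (g.roots.map fun a => X - C a).prod := hprod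
    _ = (l.map fun a => X - C a).prod := by
        rw [hl]
        conv_lhs => rw [← Multiset.coe_toList g.roots]
        rw [Multiset.map_coe, Multiset.prod_coe]
    _ = ∏ i : Fin l.length, (X - C (l.get i)) := by
        conv_lhs => rw [← List.ofFn_get l, List.map_ofFn, List.prod_ofFn]
        rfl
    _ = ∏ i : Fin k, (X - C (l.get (Fin.cast hlen.symm i))) :=
        Fintype.prod_equiv (finCongr hlen) _ _ (fun i => rfl)

lemma aux_prod_succ {k : ℕ} (g : Fin (k+1) → ℂ) (P : Fin (k+1) → Prop) [DecidablePred P]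
    (hP : ¬ P 0) :
    ∏ j ∈ univ.filter P, g j = ∏ j ∈ (univ : Finset (Fin k)).filter (fun j => P j.succ), g j.succ := by
  refine (Finset.prod_bij (fun (j : Fin k) (hj : j ∈ univ.filter fun j => P j.succ) => j.succ)
    ?_ ?_ ?_ ?_).symm
  · intro a ha; simp only [mem_filter, mem_univ, true_and] at ha ⊢; exact ha
  · intro a₁ _ a₂ _ h; exact Fin.succ_injective _ h
  · intro b hb
    simp only [mem_filter, mem_univ, true_and] at hb
    have hb0 : b ≠ 0 := fun h => hP (h ▸ hb)
    obtain ⟨a, rfl⟩ := Fin.exists_succ_eq.mpr hb0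
    exact ⟨a, by simpa using hb, rfl⟩
  · intro a _; rfl

lemma aux_vandermonde {k : ℕ} (y : Fin (k+1) → ℂ) :
    (∏ i : Fin (k+1), ∏ j ∈ univ.filter (fun j => i < j), (y i - y j)^2) =
    (∏ j : Fin k, (y 0 - y j.succ))^2 *
      ∏ i : Fin k, ∏ j ∈ univ.filter (fun j => i < j), (y i.succ - y j.succ)^2 := by
  rw [Fin.prod_univ_succ]
  congr 1
  · rw [← Finset.prod_pow]
    rw [aux_prod_succ (fun j => (y 0 - y j)^2) (fun j => (0:Fin (k+1)) < j) (by simp)]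
    apply Finset.prod_congr
    · ext j; simp [Fin.succ_pos]
    · intros; rfl
  · refine Finset.prod_congr rfl fun i _ => ?_
    rw [aux_prod_succ (fun j => (y i.succ - y j)^2) (fun j => i.succ < j) (by simp)]
    apply Finset.prod_congr
    · ext j; simp [Fin.succ_lt_succ_iff]
    · intros; rfl

lemma aux_monic (n : ℕ) (c : Fin n → ℂ) :
    (X ^ n + ∑ i : Fin n, C (c i) * X ^ (i:ℕ) : ℂ[X]).Monic ∧
    (X ^ n + ∑ i : Fin n, C (c i) * X ^ (i:ℕ) : ℂ[X]).natDegree = n := by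
  have hdeg : (∑ i : Fin n, C (c i) * X ^ (i:ℕ) : ℂ[X]).degree < (X ^ n : ℂ[X]).degree := by
    rw [degree_X_pow]
    apply lt_of_le_of_lt (degree_sum_le _ _)
    rw [Finset.sup_lt_iff (by exact_mod_cast WithBot.bot_lt_coe n)]
    intro i _
    exact lt_of_le_of_lt (degree_C_mul_X_pow_le _ _) (by exact_mod_cast i.isLt)
  refine ⟨(monic_X_pow n).add_of_left hdeg, ?_⟩
  have := degree_add_eq_left_of_degree_lt hdeg
  rw [degree_X_pow] at this
  exact natDegree_eq_of_degree_eq_some this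

set_option maxHeartbeats 2000000 in
/-- Let `D` be the discriminant of the generic monic degree-`n` polynomial as a
polynomial function of the coefficients.  If the monic polynomial
`p = Xⁿ + ∑ aᵢ Xⁱ` has a multiple root `x₀` of multiplicity `m ≥ 2` and
`δp = ∑ bᵢ Xⁱ` satisfies `δp(x₀) = 0`, then `D(a) = 0` and
`∑ (∂D/∂aᵢ)(a)·bᵢ = 0`. -/
theorem stmt_10 (n : ℕ) (D : MvPolynomial (Fin n) ℂ)
    (hD : ∀ (a x : Fin n → ℂ),
      (X ^ n + ∑ i : Fin n, C (a i) * X ^ (i : ℕ) : Polynomial ℂ) =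
          ∏ i, (X - C (x i)) →
        MvPolynomial.eval a D =
          ∏ i : Fin n, ∏ j ∈ Finset.univ.filter (fun j => i < j), (x i - x j) ^ 2)
    (a b : Fin n → ℂ) (x₀ : ℂ) (m : ℕ) (hm : 2 ≤ m)
    (p : Polynomial ℂ) (hp : p = X ^ n + ∑ i : Fin n, C (a i) * X ^ (i : ℕ))
    (hmult : p.rootMultiplicity x₀ = m)
    (hδ : ∑ i : Fin n, b i * x₀ ^ (i : ℕ) = 0) :
    MvPolynomial.eval a D = 0 ∧
      ∑ i : Fin n, MvPolynomial.eval a (MvPolynomial.pderiv i D) * b i = 0 := by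
  -- rule out n = 0
  rcases Nat.eq_zero_or_pos n with hn0 | hn
  · exfalso
    subst hn0
    have hp1 : p = 1 := by simpa using hp
    rw [hp1] at hmult
    rw [rootMultiplicity_eq_zero (by simp [IsRoot])] at hmult
    omega
  obtain ⟨k, rfl⟩ : ∃ k, n = k + 1 := ⟨n - 1, by omega⟩
  set δp : ℂ[X] := ∑ i : Fin (k+1), C (b i) * X ^ (i:ℕ) with hδp
  obtain ⟨q, hq⟩ : (X - C x₀)^2 ∣ p :=
    dvd_trans (pow_dvd_pow _ hm) (hmult ▸ p.pow_rootMultiplicity_dvd x₀)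
  obtain ⟨r, hr⟩ : (X - C x₀) ∣ δp := by
    rw [dvd_iff_isRoot]
    simpa [hδp, IsRoot, eval_finset_sum] using hδ
  set B : NNReal :=
    (((range (k+1)).sup fun j => ‖((X - C x₀) * q).coeff j‖₊ + ‖r.coeff j‖₊) + 1) with hB
  set M : ℝ := ∏ i : Fin k, ∏ _j ∈ (univ : Finset (Fin k)).filter (fun j => i < j),
      (2*(B:ℝ))^2 with hM
  have key : ∀ t : ℂ, ∃ d : ℂ, MvPolynomial.eval (fun i => a i + t * b i) D
      = t^2 * ((r.eval x₀)^2 * d) ∧ (‖t‖ ≤ 1 → ‖d‖ ≤ M) := by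
    intro t
    set g : ℂ[X] := (X - C x₀) * q + C t * r with hg
    set pt : ℂ[X] := X ^ (k+1) + ∑ i : Fin (k+1), C (a i + t * b i) * X ^ (i:ℕ) with hpt
    have hptm := (aux_monic (k+1) (fun i => a i + t * b i)).1
    have hptd := (aux_monic (k+1) (fun i => a i + t * b i)).2
    have hptfact : pt = (X - C x₀) * g := by
      have h1 : pt = p + C t * δp := by
        rw [hpt, hp, hδp, Finset.mul_sum, add_assoc, ← Finset.sum_add_distrib]
        refine congrArg _ (Finset.sum_congr rfl fun i _ => ?_)
        rw [C_add, C_mul]; ring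
      rw [h1, hq, hr, hg]; ring
    have hgm : g.Monic := (monic_X_sub_C x₀).of_mul_monic_left (hptfact ▸ hptm)
    have hgd : g.natDegree = k := by
      have h1 : pt.natDegree = 1 + g.natDegree := by
        rw [hptfact, natDegree_mul (X_sub_C_ne_zero x₀) hgm.ne_zero, natDegree_X_sub_C]
      rw [hpt] at h1
      rw [hptd] at h1
      omega
    obtain ⟨y, hy⟩ := aux_enum hgm hgd
    set x : Fin (k+1) → ℂ := Fin.cases x₀ y with hx
    have hxprod : (X ^ (k+1) + ∑ i : Fin (k+1), C ((fun i => a i + t * b i) i) * X ^ (i:ℕ) : ℂ[X])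
        = ∏ i : Fin (k+1), (X - C (x i)) := by
      rw [Fin.prod_univ_succ]
      show pt = _
      rw [hptfact, hy]
      rfl
    have hDt := hD (fun i => a i + t * b i) x hxprod
    rw [aux_vandermonde x] at hDt
    have hxs : ∀ j : Fin k, x j.succ = y j := fun j => by simp [hx]
    have hx0 : x 0 = x₀ := rfl
    have hgev : ∏ j : Fin k, (x₀ - y j) = t * r.eval x₀ := by
      have h1 : g.eval x₀ = t * r.eval x₀ := by rw [hg]; simp
      have h2 : g.eval x₀ = ∏ j : Fin k, (x₀ - y j) := by rw [hy]; simp [eval_prod]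
      rw [← h2, h1]
    refine ⟨∏ i : Fin k, ∏ j ∈ (univ:Finset (Fin k)).filter (fun j => i < j), (y i - y j)^2,
      ?_, ?_⟩
    · rw [hDt]
      simp only [hx0, hxs]
      rw [hgev]; ring
    · intro ht
      have hroot : ∀ i : Fin k, ‖y i‖ ≤ (B:ℝ) := by
        intro i
        have hyroot : g.IsRoot (y i) := by
          rw [hy, IsRoot, eval_prod]
          exact Finset.prod_eq_zero (mem_univ i) (by simp)
        have hlt := hyroot.norm_lt_cauchyBound hgm.ne_zero
        have hcb : cauchyBound g ≤ B := by
          rw [Polynomial.cauchyBound, hgm.leadingCoeff]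
          simp only [nnnorm_one, div_one]
          rw [hB]
          refine add_le_add_left ?_ 1
          apply Finset.sup_le
          intro j hj
          have hmem : j ∈ range (k+1) := by
            rw [mem_range] at hj ⊢; rw [hgd] at hj; omega
          refine le_trans ?_ (Finset.le_sup hmem)
          rw [hg, coeff_add]
          refine le_trans (nnnorm_add_le _ _) ?_
          beta_reduce
          refine add_le_add_right ?_ _
          rw [coeff_C_mul, nnnorm_mul]
          have ht' : ‖t‖₊ ≤ 1 := by rw [← NNReal.coe_le_coe]; simpa using ht
          calc ‖t‖₊ * ‖r.coeff j‖₊ ≤ 1 * ‖r.coeff j‖₊ := mul_le_mul_left ht' _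
            _ = ‖r.coeff j‖₊ := one_mul _
        have hfin : ‖y i‖₊ ≤ B := hlt.le.trans hcb
        exact_mod_cast hfin
      rw [hM]
      rw [norm_prod]
      apply Finset.prod_le_prod (fun i _ => norm_nonneg _)
      intro i _
      rw [norm_prod]
      apply Finset.prod_le_prod (fun j _ => norm_nonneg _)
      intro j _
      rw [norm_pow]
      apply pow_le_pow_left₀ (norm_nonneg _)
      calc ‖y i - y j‖ ≤ ‖y i‖ + ‖y j‖ := norm_sub_le _ _
        _ ≤ (B:ℝ) + (B:ℝ) := add_le_add (hroot i) (hroot j)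
        _ = 2*(B:ℝ) := by ring
  have e0 : (fun i => a i + (0:ℂ) * b i) = a := funext fun i => by ring
  have part1 : MvPolynomial.eval a D = 0 := by
    obtain ⟨d, hd, -⟩ := key 0
    rw [e0] at hd
    rw [hd]; ring
  refine ⟨part1, ?_⟩
  have hder := aux_hasDerivAt (k+1) a b D
  rw [hasDerivAt_iff_tendsto_slope] at hder
  have hten : Filter.Tendsto (slope (fun t : ℂ => MvPolynomial.eval (fun i => a i + t * b i) D) 0)
      (nhdsWithin (0:ℂ) {(0:ℂ)}ᶜ) (nhds 0) := by
    apply squeeze_zero_norm' (a := fun t : ℂ => ‖t‖ * (‖r.eval x₀‖^2 * M))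
    · have h1 : ∀ᶠ t : ℂ in nhds 0, ‖t‖ ≤ 1 := by
        filter_upwards [Metric.closedBall_mem_nhds (0:ℂ) one_pos] with t htt
        simpa [dist_eq_norm] using htt
      filter_upwards [h1.filter_mono nhdsWithin_le_nhds, self_mem_nhdsWithin] with t ht htne
      have htne' : t ≠ 0 := htne
      obtain ⟨d, hd, hdb⟩ := key t
      rw [slope_def_field]
      have hf0 : MvPolynomial.eval (fun i => a i + (0:ℂ) * b i) D = 0 := by rw [e0]; exact part1
      rw [hf0, hd, sub_zero, sub_zero]
      have : t^2 * ((r.eval x₀)^2 * d) / t = t * ((r.eval x₀)^2 * d) := by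
        field_simp
      rw [this, norm_mul]
      refine mul_le_mul_of_nonneg_left ?_ (norm_nonneg t)
      rw [norm_mul, norm_pow]
      exact mul_le_mul_of_nonneg_left (hdb ht) (by positivity)
    · have : Filter.Tendsto (fun t : ℂ => ‖t‖ * (‖r.eval x₀‖^2 * M)) (nhds 0) (nhds 0) := by
        have h2 := (continuous_norm (E := ℂ)).tendsto (0:ℂ)
        rw [norm_zero] at h2
        simpa using h2.mul_const (‖r.eval x₀‖^2 * M)
      exact this.mono_left nhdsWithin_le_nhds
  exact tendsto_nhds_unique hder hten
end

section
/- Any monic polynomial over ℂ with a multiple root x₀ is the limit (in the space of coefficient tuples) of a sequence of monic polynomials of the same degree, each having x₀ as a root of multiplicity exactly 2 and all other roots simple and distinct from x₀. -/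
open Polynomial Filter

private lemma tendstoCoeff_mul {f g : ℕ → Polynomial ℂ} {F G : Polynomial ℂ}
    (hf : ∀ i, Tendsto (fun s => (f s).coeff i) atTop (nhds (F.coeff i)))
    (hg : ∀ i, Tendsto (fun s => (g s).coeff i) atTop (nhds (G.coeff i))) :
    ∀ i, Tendsto (fun s => (f s * g s).coeff i) atTop (nhds ((F * G).coeff i)) := by
  intro i
  simp_rw [Polynomial.coeff_mul]
  exact tendsto_finset_sum _ fun jk _ => (hf jk.1).mul (hg jk.2)

private lemma tendstoCoeff_prod {ι : Type*} (u : Finset ι) (f : ℕ → ι → Polynomial ℂ)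
    (F : ι → Polynomial ℂ)
    (h : ∀ k ∈ u, ∀ i, Tendsto (fun s => (f s k).coeff i) atTop (nhds ((F k).coeff i))) :
    ∀ i, Tendsto (fun s => (∏ k ∈ u, f s k).coeff i) atTop (nhds ((∏ k ∈ u, F k).coeff i)) := by
  classical
  induction u using Finset.induction with
  | empty => intro i; simp
  | @insert x u hx ih =>
      simp only [Finset.prod_insert hx]
      exact tendstoCoeff_mul (h _ (Finset.mem_insert_self _ _))
        (ih fun k hk => h k (Finset.mem_insert_of_mem hk))

private lemma tendstoCoeff_X_sub_C {c : ℕ → ℂ} {c₀ : ℂ}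
    (hc : Tendsto c atTop (nhds c₀)) :
    ∀ i, Tendsto (fun s => ((X : Polynomial ℂ) - C (c s)).coeff i) atTop
      (nhds (((X : Polynomial ℂ) - C c₀).coeff i)) := by
  intro i
  have key : ∀ d : ℂ, ((X : Polynomial ℂ) - C d).coeff i =
      (X : Polynomial ℂ).coeff i - if i = 0 then d else 0 := by
    intro d
    simp [Polynomial.coeff_sub, Polynomial.coeff_C]
  simp_rw [key]
  apply tendsto_const_nhds.sub
  by_cases h0 : i = 0 <;> simp [h0, hc]

/-- Any monic polynomial over ℂ with a multiple root `x₀` is the coefficientwise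
limit of a sequence of monic polynomials of the same degree, each having `x₀` as
a root of multiplicity exactly 2 and all other roots simple and distinct from `x₀`. -/
theorem stmt_11 (n : ℕ) (p : Polynomial ℂ) (hmonic : p.Monic) (hdeg : p.natDegree = n)
    (x₀ : ℂ) (hroot : 2 ≤ p.rootMultiplicity x₀) :
    ∃ ps : ℕ → Polynomial ℂ,
      (∀ s : ℕ, (ps s).Monic ∧ (ps s).natDegree = n ∧
        (ps s).rootMultiplicity x₀ = 2 ∧
        ∀ z : ℂ, z ≠ x₀ → (ps s).rootMultiplicity z ≤ 1) ∧
      ∀ i : ℕ, Tendsto (fun s => (ps s).coeff i) atTop (nhds (p.coeff i)) := by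
  classical
  have hsplits : p.Splits := IsAlgClosed.splits p
  have hcount : 2 ≤ p.roots.count x₀ := by
    rw [Polynomial.count_roots]; exact hroot
  set m' : Multiset ℂ := (p.roots.erase x₀).erase x₀ with hm'
  have h1 : x₀ ∈ p.roots := Multiset.count_pos.mp (by omega)
  have h2 : x₀ ∈ p.roots.erase x₀ := by
    rw [← Multiset.one_le_count_iff_mem, Multiset.count_erase_self]
    omega
  have hcons : p.roots = x₀ ::ₘ x₀ ::ₘ m' := by
    rw [hm', Multiset.cons_erase h2, Multiset.cons_erase h1]
  set l : List ℂ := m'.toList with hldef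
  set N : ℕ := l.length with hN
  set a : ℕ → ℂ := fun k => l.getD k 0 with ha
  have hlcoe : (l : Multiset ℂ) = m' := Multiset.coe_toList m'
  have hlist : l = (List.range N).map (fun k => a k) := by
    apply List.ext_getElem
    · simp [hN]
    · intro i hi hi'
      simp only [List.getElem_map, List.getElem_range, ha]
      rw [List.getD_eq_getElem]
  -- the polynomial as a product
  have hn : n = N + 2 := by
    have := Polynomial.Splits.natDegree_eq_card_roots hsplits
    rw [hcons, hdeg] at this
    simp only [Multiset.card_cons] at this
    have hcard : Multiset.card m' = N := by
      rw [← hlcoe]; simp [hN]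
    omega
  -- choice of perturbation parameters
  set B : Finset ℂ :=
    ((Finset.range N ×ˢ Finset.range N).image fun jk =>
      (a jk.1 - a jk.2) / ((jk.2 : ℂ) - (jk.1 : ℂ))) ∪
    ((Finset.range N).image fun k => (x₀ - a k) / ((k : ℂ) + 1)) with hB
  have key : ∀ s : ℕ, ∃ t : ℂ, t ∉ B ∧ ‖t‖ ≤ 1 / (s + 1) := by
    intro s
    set f : ℕ → ℂ := fun k => (((s + k + 1 : ℕ) : ℂ))⁻¹ with hf
    have hinj : Function.Injective f := by
      intro j k hjk
      have := inv_inj.mp hjk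
      have := Nat.cast_injective (R := ℂ) this
      omega
    have : ∃ k, f k ∉ (B : Set ℂ) := by
      by_contra hcon
      push_neg at hcon
      have hsub : Set.range f ⊆ (B : Set ℂ) := by
        rintro _ ⟨k, rfl⟩; exact hcon k
      exact (Set.infinite_range_of_injective hinj) (B.finite_toSet.subset hsub)
    obtain ⟨k, hk⟩ := this
    refine ⟨f k, by simpa using hk, ?_⟩
    have hpos : (0 : ℝ) < (s + k + 1 : ℕ) := by positivity
    rw [hf]
    simp only [norm_inv]
    rw [Complex.norm_natCast]
    rw [inv_eq_one_div]
    apply div_le_div_of_nonneg_left (by norm_num) (by positivity)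
    push_cast; linarith
  choose t htB htnorm using key
  have htend : Tendsto t atTop (nhds 0) := by
    apply squeeze_zero_norm htnorm
    have := tendsto_one_div_add_atTop_nhds_zero_nat (𝕜 := ℝ)
    simpa using this
  -- perturbed roots
  set b : ℕ → ℕ → ℂ := fun s k => a k + t s * ((k : ℂ) + 1) with hb
  have hbne : ∀ s, ∀ k < N, b s k ≠ x₀ := by
    intro s k hk heq
    apply htB s
    rw [hB]
    apply Finset.mem_union_right
    apply Finset.mem_image.mpr
    refine ⟨k, Finset.mem_range.mpr hk, ?_⟩
    have hk1 : ((k : ℂ) + 1) ≠ 0 := Nat.cast_add_one_ne_zero k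
    rw [div_eq_iff hk1]
    rw [hb] at heq
    simp only at heq
    linear_combination -heq
  have hbinj : ∀ s, ∀ j < N, ∀ k < N, j ≠ k → b s j ≠ b s k := by
    intro s j hj k hk hjk heq
    apply htB s
    rw [hB]
    apply Finset.mem_union_left
    apply Finset.mem_image.mpr
    refine ⟨(j, k), Finset.mem_product.mpr ⟨Finset.mem_range.mpr hj, Finset.mem_range.mpr hk⟩, ?_⟩
    have hne : ((k : ℂ) - (j : ℂ)) ≠ 0 := by
      intro h
      apply hjk
      have : (j : ℂ) = (k : ℂ) := by linear_combination -h
      exact_mod_cast this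
    show (a j - a k) / ((k : ℂ) - (j : ℂ)) = t s
    rw [div_eq_iff hne]
    rw [hb] at heq
    simp only at heq
    linear_combination heq
  -- the multiset of roots of the approximating polynomial
  set M : ℕ → Multiset ℂ := fun s =>
    x₀ ::ₘ x₀ ::ₘ (((List.range N).map (b s) : List ℂ) : Multiset ℂ) with hM
  set ps : ℕ → Polynomial ℂ := fun s => ((M s).map fun r => X - C r).prod with hps
  have hcardM : ∀ s, Multiset.card (M s) = n := by
    intro s
    rw [hM]
    simp [hn]
  have hmon : ∀ s, (ps s).Monic := by
    intro s
    apply monic_multiset_prod_of_monic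
    intro r _
    exact monic_X_sub_C r
  have hroots : ∀ s, (ps s).roots = M s := by
    intro s
    exact Polynomial.roots_multiset_prod_X_sub_C (M s)
  have hdeg' : ∀ s, (ps s).natDegree = n := by
    intro s
    rw [hps]
    rw [Polynomial.natDegree_multiset_prod_X_sub_C_eq_card]
    exact hcardM s
  have hne0 : ∀ s, ps s ≠ 0 := fun s => (hmon s).ne_zero
  have hmult : ∀ s z, (ps s).rootMultiplicity z = (M s).count z := by
    intro s z
    rw [← Polynomial.count_roots, hroots]
  refine ⟨ps, fun s => ⟨hmon s, hdeg' s, ?_, ?_⟩, ?_⟩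
  · -- rootMultiplicity x₀ = 2
    rw [hmult]
    rw [hM]
    have hx : x₀ ∉ List.map (b s) (List.range N) := by
      intro hmem
      rw [List.mem_map] at hmem
      obtain ⟨k, hk, hbk⟩ := hmem
      exact hbne s k (by simpa using hk) hbk
    simp only [Multiset.count_cons_self, Multiset.count_cons]
    rw [Multiset.coe_count, List.count_eq_zero.mpr hx]
  · -- other roots simple
    intro z hz
    rw [hmult, hM]
    simp only [Multiset.count_cons, if_neg hz, add_zero]
    rw [Multiset.coe_count]
    apply List.nodup_iff_count_le_one.mp
    apply List.Nodup.map_on _ (List.nodup_range (n := N))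
    intro j hj k hk hbjk
    by_contra hjk
    exact hbinj s j (by simpa using hj) k (by simpa using hk) hjk hbjk
  · -- convergence of coefficients
    have hlrp : ∀ g : ℕ → Polynomial ℂ,
        (((List.range N).map g : List (Polynomial ℂ)) : Multiset (Polynomial ℂ)).prod =
          ∏ k ∈ Finset.range N, g k := by
      intro g
      rw [Finset.prod_eq_multiset_prod]
      rfl
    have hpprod : p = (X - C x₀) ^ 2 * ∏ k ∈ Finset.range N, (X - C (a k)) := by
      conv_lhs => rw [Polynomial.Splits.eq_prod_roots_of_monic hsplits hmonic, hcons]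
      rw [← hlcoe, hlist]
      simp only [Multiset.map_cons, Multiset.prod_cons]
      rw [Multiset.map_coe, List.map_map, hlrp]
      simp only [Function.comp_apply]
      ring
    have hpsprod : ∀ s, ps s = (X - C x₀) ^ 2 * ∏ k ∈ Finset.range N, (X - C (b s k)) := by
      intro s
      rw [hps, hM]
      simp only [Multiset.map_cons, Multiset.prod_cons]
      rw [Multiset.map_coe, List.map_map, hlrp]
      simp only [Function.comp_apply]
      ring
    intro i
    rw [hpprod]
    simp_rw [hpsprod]
    refine tendstoCoeff_mul (fun j => tendsto_const_nhds) ?_ i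
    apply tendstoCoeff_prod
    intro k _
    apply tendstoCoeff_X_sub_C
    have : Tendsto (fun s => b s k) atTop (nhds (a k + 0 * ((k : ℂ) + 1))) :=
      tendsto_const_nhds.add (htend.mul_const _)
    simpa using this
end

section
/- Let p(x,y) be a polynomial in x of degree n with coefficients differentiable in y ∈ ℂ and leading coefficient aₙ(y), and suppose at (x₀,y₀) with aₙ(y₀) ≠ 0 we have p(x₀,y₀) = 0, ∂p/∂x(x₀,y₀) = 0, and ∂p/∂y(x₀,y₀) = 0. Then the discriminant D(y) of p(·,y) (with respect to x) satisfies D(y₀) = 0 and D'(y₀) = 0. -/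
open Polynomial Finset
set_option maxHeartbeats 1000000

noncomputable def Complex.abs : AbsoluteValue ℂ ℝ := NormedField.toAbsoluteValue ℂ

lemma Complex.norm_eq_abs (z : ℂ) : ‖z‖ = Complex.abs z := rfl

lemma aux_coeff {n : ℕ} (b : Fin (n+1) → ℂ) (k : Fin (n+1)) :
    (∑ i : Fin (n+1), C (b i) * X ^ (i:ℕ)).coeff (k:ℕ) = b k := by
  rw [finset_sum_coeff]
  simp only [coeff_C_mul, coeff_X_pow, mul_ite, mul_one, mul_zero]
  rw [Finset.sum_eq_single k] <;> simp +contextual [Fin.val_eq_val, eq_comm]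

lemma aux_natDegree {n : ℕ} (b : Fin (n+1) → ℂ) (hb : b (Fin.last n) ≠ 0) :
    (∑ i : Fin (n+1), C (b i) * X ^ (i:ℕ)).natDegree = n := by
  apply le_antisymm
  · apply natDegree_sum_le_of_forall_le
    intro i _
    exact (natDegree_C_mul_le _ _).trans (by simp [Fin.is_le])
  · apply le_natDegree_of_ne_zero
    have h := aux_coeff b (Fin.last n)
    simp only [Fin.val_last] at h
    rw [h]; exact hb

-- symmetric double product identity (in ℝ, via abs)
lemma aux_sym {n : ℕ} (A : Fin n → Fin n → ℝ) (hsym : ∀ i j, A i j = A j i) :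
    ∏ i, ∏ j ∈ univ.erase i, A i j = ∏ i, ∏ j ∈ univ.filter (fun j => i < j), (A i j)^2 := by
  have hsplit : ∀ i : Fin n, (univ : Finset (Fin n)).erase i =
      (univ.filter (fun j => i < j)) ∪ (univ.filter (fun j => j < i)) := by
    intro i; ext j
    simp only [mem_erase, mem_filter, mem_union, mem_univ, true_and, and_true]
    constructor
    · intro h; exact (lt_or_gt_of_ne (Ne.symm h)).imp id id
    · rintro (h|h) <;> first | exact ne_of_gt h | exact ne_of_lt h
  have hdisj : ∀ i : Fin n, Disjoint (univ.filter (fun j => i < j)) (univ.filter (fun j : Fin n => j < i)) := by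
    intro i
    simp only [disjoint_filter]
    intro j _ h1 h2; exact absurd (h1.trans h2) (lt_irrefl i)
  calc ∏ i, ∏ j ∈ univ.erase i, A i j
      = ∏ i, ((∏ j ∈ univ.filter (fun j => i < j), A i j) * ∏ j ∈ univ.filter (fun j => j < i), A i j) := by
        refine Finset.prod_congr rfl fun i _ => ?_
        rw [hsplit i, Finset.prod_union (hdisj i)]
    _ = (∏ i, ∏ j ∈ univ.filter (fun j => i < j), A i j) * ∏ i, ∏ j ∈ univ.filter (fun j : Fin n => j < i), A i j := by
        rw [Finset.prod_mul_distrib]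
    _ = (∏ i, ∏ j ∈ univ.filter (fun j => i < j), A i j) * ∏ i, ∏ j ∈ univ.filter (fun j => i < j), A i j := by
        congr 1
        rw [Finset.prod_comm' (t' := univ) (s' := fun j => univ.filter (fun i => j < i)) (by simp)]
        exact Finset.prod_congr rfl fun i _ => Finset.prod_congr rfl fun j _ => (hsym i j).symm
    _ = _ := by rw [← Finset.prod_mul_distrib]; exact Finset.prod_congr rfl fun i _ => by rw [← Finset.prod_mul_distrib]; exact Finset.prod_congr rfl fun j _ => (sq (A i j)).symm

-- root bound
lemma aux_rootbound {n : ℕ} (b : Fin (n+1) → ℂ) (z : ℂ)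
    (hz : ∑ i : Fin (n+1), b i * z ^ (i:ℕ) = 0) (hb : b (Fin.last n) ≠ 0) :
    Complex.abs z ≤ max 1 ((∑ i : Fin (n+1), Complex.abs (b i)) / Complex.abs (b (Fin.last n))) := by
  rcases le_or_gt (Complex.abs z) 1 with h | h
  · exact le_max_of_le_left h
  refine le_max_of_le_right ?_
  rw [le_div_iff₀ (AbsoluteValue.pos _ hb), mul_comm]
  -- b_last z^n = -∑_{i<n}
  rw [Fin.sum_univ_castSucc] at hz
  have key : b (Fin.last n) * z ^ n = -∑ i : Fin n, b i.castSucc * z ^ (i:ℕ) := by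
    rw [eq_neg_iff_add_eq_zero, add_comm]; simpa using hz
  have h1 : Complex.abs (b (Fin.last n)) * (Complex.abs z)^n
      ≤ ∑ i : Fin n, Complex.abs (b i.castSucc) * (Complex.abs z)^(i:ℕ) := by
    rw [← map_pow, ← map_mul, key, map_neg_eq_map]
    refine (AbsoluteValue.sum_le _ _ _).trans (le_of_eq ?_)
    exact Finset.sum_congr rfl fun i _ => by rw [map_mul, map_pow]
  have h2 : ∀ i : Fin n, Complex.abs (b i.castSucc) * (Complex.abs z)^(i:ℕ)
      ≤ Complex.abs (b i.castSucc) * (Complex.abs z)^(n-1) := by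
    intro i
    exact mul_le_mul_of_nonneg_left (pow_le_pow_right₀ h.le (by omega)) (by positivity)
  have h3 : Complex.abs (b (Fin.last n)) * (Complex.abs z)^n
      ≤ (∑ i : Fin n, Complex.abs (b i.castSucc)) * (Complex.abs z)^(n-1) := by
    rw [Finset.sum_mul]
    exact h1.trans (Finset.sum_le_sum fun i _ => h2 i)
  have h4 : (∑ i : Fin n, Complex.abs (b i.castSucc)) ≤ ∑ i : Fin (n+1), Complex.abs (b i) := by
    rw [Fin.sum_univ_castSucc]
    simp [AbsoluteValue.nonneg]
  rcases Nat.eq_zero_or_pos n with rfl | hn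
  · simp only [Finset.univ_eq_empty, Finset.sum_empty] at h3
    have h0 : Complex.abs (b (Fin.last 0)) ≤ 0 := by simpa using h3
    exact absurd (le_antisymm h0 (AbsoluteValue.nonneg _ _)) (AbsoluteValue.ne_zero _ hb)
  have hzn : (Complex.abs z)^n = Complex.abs z * (Complex.abs z)^(n-1) := by
    rw [← pow_succ']; congr 1; omega
  have h5 := h3.trans (mul_le_mul_of_nonneg_right h4 (by positivity))
  have hpos : (0:ℝ) < (Complex.abs z)^(n-1) := by positivity
  rw [hzn, ← mul_assoc] at h5
  exact le_of_mul_le_mul_right h5 hpos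

lemma aux_listprod {β : Type*} [CommMonoid β] (m : List ℂ) (f : ℂ → β) :
    (Multiset.map f (↑m : Multiset ℂ)).prod = ∏ i : Fin m.length, f (m.get i) := by
  rw [Multiset.map_coe, Multiset.prod_coe]
  conv_lhs => rw [← List.ofFn_get m]
  rw [List.map_ofFn, List.prod_ofFn]
  rfl

lemma aux_roots {n : ℕ} (q : ℂ[X]) (hdeg : q.natDegree = n) (hq : q ≠ 0) (x₀ : ℂ)
    (hroot : q.eval x₀ = 0) :
    ∃ (x : Fin n → ℂ) (i₀ : Fin n), x i₀ = x₀ ∧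
      q = C q.leadingCoeff * ∏ i, (X - C (x i)) ∧ (∀ i, q.eval (x i) = 0) := by
  have hsplit : Splits q := IsAlgClosed.splits q
  have hcard : q.roots.card = n := by rw [splits_iff_card_roots.mp hsplit, hdeg]
  have hfac := hsplit.eq_prod_roots
  set l : List ℂ := q.roots.toList with hl
  have hlen : l.length = n := by rw [hl, Multiset.length_toList, hcard]
  have hx₀ : x₀ ∈ l := by
    rw [hl, Multiset.mem_toList, mem_roots hq]
    exact hroot
  obtain ⟨k, hk⟩ := List.mem_iff_get.mp hx₀
  refine ⟨fun i => l.get (Fin.cast hlen.symm i), Fin.cast hlen k, by simpa using hk, ?_, ?_⟩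
  · conv_lhs => rw [hfac]
    congr 1
    rw [← Multiset.coe_toList q.roots, aux_listprod]
    exact ((finCongr hlen.symm).prod_comp fun j => X - C (l.get j)).symm
  · intro i
    have hm : l.get (Fin.cast hlen.symm i) ∈ l := l.get_mem _
    have hm2 : l.get (Fin.cast hlen.symm i) ∈ q.roots := Multiset.mem_toList.mp hm
    rw [mem_roots hq] at hm2
    exact hm2

lemma aux_deriv {n : ℕ} (lc : ℂ) (x : Fin n → ℂ) (i₀ : Fin n) :
    eval (x i₀) (derivative (C lc * ∏ i, (X - C (x i)))) =
      lc * ∏ j ∈ univ.erase i₀, (x i₀ - x j) := by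
  have h : C lc * ∏ i, (X - C (x i)) =
      (X - C (x i₀)) * (C lc * ∏ j ∈ univ.erase i₀, (X - C (x j))) := by
    rw [← Finset.mul_prod_erase univ _ (Finset.mem_univ i₀)]; ring
  rw [h, derivative_mul, eval_add, eval_mul, eval_mul]
  simp [eval_prod]

lemma aux_bound {n : ℕ} (c v : Fin (n+1) → ℂ) (x₀ : ℂ)
    (D : MvPolynomial (Fin (n+1)) ℂ)
    (hD : ∀ (b : Fin (n + 1) → ℂ) (x : Fin n → ℂ),
      (∑ i : Fin (n + 1), C (b i) * X ^ (i : ℕ) : Polynomial ℂ) =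
          C (b (Fin.last n)) * ∏ i, (X - C (x i)) →
        MvPolynomial.eval b D =
          b (Fin.last n) ^ (2 * n - 2) *
            ∏ i : Fin n, ∏ j ∈ Finset.univ.filter (fun j => i < j), (x i - x j) ^ 2)
    (hlc : c (Fin.last n) ≠ 0)
    (hp0 : eval x₀ (∑ i : Fin (n+1), C (c i) * X ^ (i:ℕ)) = 0)
    (hpx0 : eval x₀ (derivative (∑ i : Fin (n+1), C (c i) * X ^ (i:ℕ))) = 0)
    (hv : eval x₀ (∑ i : Fin (n+1), C (v i) * X ^ (i:ℕ)) = 0) :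
    ∃ δ > (0:ℝ), ∃ C₀ : ℝ, ∀ t : ℂ, Complex.abs t ≤ δ →
      Complex.abs (MvPolynomial.eval (fun i => c i + t * v i) D) ≤ C₀ * (Complex.abs t)^2 := by
  classical
  set α := c (Fin.last n) with hα
  set q0 : ℂ[X] := ∑ i : Fin (n+1), C (c i) * X ^ (i:ℕ) with hq0
  set V : ℂ[X] := ∑ i : Fin (n+1), C (v i) * X ^ (i:ℕ) with hV
  set K : ℂ := eval x₀ (derivative V) with hK
  set T : ℝ := ∑ i : Fin (n+1), (Complex.abs (c i) + Complex.abs (v i)) with hT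
  set M : ℝ := max 1 (T / (Complex.abs α / 2)) with hM
  have hM1 : (1:ℝ) ≤ M := le_max_left _ _
  set Λ : ℝ := Complex.abs α + Complex.abs (v (Fin.last n)) with hΛ
  set δ : ℝ := min 1 (Complex.abs α / (2 * (Complex.abs (v (Fin.last n)) + 1))) with hδ
  have hαpos : 0 < Complex.abs α := AbsoluteValue.pos _ hlc
  have hδpos : 0 < δ := lt_min one_pos (by positivity)
  refine ⟨δ, hδpos, Λ^(2*n-2) * (2 * Complex.abs K / Complex.abs α)^2 * (2*M)^(n*n), ?_⟩
  intro t ht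
  have ht1 : Complex.abs t ≤ 1 := ht.trans (min_le_left _ _)
  set b : Fin (n+1) → ℂ := fun i => c i + t * v i with hb
  -- lower bound on leading coefficient
  have hblast : b (Fin.last n) = α + t * v (Fin.last n) := rfl
  have hlb : Complex.abs α / 2 ≤ Complex.abs (b (Fin.last n)) := by
    rw [hblast]
    have h1 : Complex.abs (t * v (Fin.last n)) ≤ Complex.abs α / 2 := by
      rw [map_mul]
      have h2 : Complex.abs t ≤ Complex.abs α / (2 * (Complex.abs (v (Fin.last n)) + 1)) :=
        ht.trans (min_le_right _ _)
      calc Complex.abs t * Complex.abs (v (Fin.last n))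
          ≤ (Complex.abs α / (2 * (Complex.abs (v (Fin.last n)) + 1))) * (Complex.abs (v (Fin.last n)) + 1) := by
            apply mul_le_mul h2 (by linarith [AbsoluteValue.nonneg Complex.abs (v (Fin.last n))]) (AbsoluteValue.nonneg _ _) (by positivity)
        _ = Complex.abs α / 2 := by field_simp
    calc Complex.abs α / 2 = Complex.abs α - Complex.abs α / 2 := by ring
      _ ≤ Complex.abs α - Complex.abs (t * v (Fin.last n)) := by linarith
      _ ≤ Complex.abs (α + t * v (Fin.last n)) := by
          have h3 := Complex.abs.add_le (α + t * v (Fin.last n)) (-(t * v (Fin.last n)))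
          simp only [add_neg_cancel_right, map_neg_eq_map] at h3
          linarith
  have hbne : b (Fin.last n) ≠ 0 := by
    intro h
    rw [h, map_zero] at hlb
    linarith
  set q : ℂ[X] := ∑ i : Fin (n+1), C (b i) * X ^ (i:ℕ) with hq
  have hqsplit : q = q0 + C t * V := by
    rw [hq, hq0, hV, Finset.mul_sum, ← Finset.sum_add_distrib]
    refine Finset.sum_congr rfl fun i _ => ?_
    rw [hb]
    simp only [C_add, C_mul]
    ring
  have hqx₀ : eval x₀ q = 0 := by
    rw [hqsplit, eval_add, eval_mul, eval_C, hp0, hv, mul_zero, add_zero]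
  have hqd : q.natDegree = n := aux_natDegree b hbne
  have hqne : q ≠ 0 := by
    intro h
    apply hbne
    have h2 := aux_coeff b (Fin.last n)
    rw [← hq, h, coeff_zero] at h2
    exact h2.symm
  have hqlc : q.leadingCoeff = b (Fin.last n) := by
    rw [leadingCoeff, hqd]
    have h2 := aux_coeff b (Fin.last n)
    rw [← hq] at h2
    simpa using h2
  obtain ⟨x, i₀, hxi₀, hfac, hxr⟩ := aux_roots q hqd hqne x₀ hqx₀
  rw [hqlc] at hfac
  have hfeq := hD b x (by rw [← hq]; exact hfac)
  have hdq : eval x₀ (derivative q) = t * K := by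
    rw [hqsplit, derivative_add, derivative_C_mul, eval_add, eval_mul, eval_C, hpx0, hK, zero_add]
  have hPi : b (Fin.last n) * ∏ j ∈ univ.erase i₀, (x₀ - x j) = t * K := by
    have h2 := aux_deriv (b (Fin.last n)) x i₀
    rw [hxi₀, ← hfac] at h2
    rw [← h2, hdq]
  -- root bounds
  have hroots : ∀ i, Complex.abs (x i) ≤ M := by
    intro i
    have h0 : ∑ j : Fin (n+1), b j * (x i)^(j:ℕ) = 0 := by
      have h1 := hxr i
      rw [hq, eval_finset_sum] at h1
      simpa using h1
    refine (aux_rootbound b (x i) h0 hbne).trans (max_le_max le_rfl ?_)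
    have hTb : ∑ j : Fin (n+1), Complex.abs (b j) ≤ T := by
      rw [hT]
      refine Finset.sum_le_sum fun j _ => ?_
      rw [hb]
      refine (Complex.abs.add_le _ _).trans ?_
      rw [map_mul]
      gcongr
      exact mul_le_of_le_one_left (AbsoluteValue.nonneg _ _) ht1
    exact div_le_div₀ (le_trans (Finset.sum_nonneg fun j _ => AbsoluteValue.nonneg _ _) hTb) hTb (by positivity) hlb
  have hM0 : (0:ℝ) < M := lt_of_lt_of_le one_pos hM1
  have h2M : (1:ℝ) ≤ 2*M := by linarith
  have hA : ∀ i j, Complex.abs (x i - x j) ≤ 2*M := by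
    intro i j
    rw [sub_eq_add_neg]
    refine (Complex.abs.add_le _ _).trans ?_
    rw [map_neg_eq_map]
    linarith [hroots i, hroots j]
  set PP : ℝ := ∏ j ∈ univ.erase i₀, Complex.abs (x₀ - x j) with hPidef
  have hPin : 0 ≤ PP := Finset.prod_nonneg fun j _ => AbsoluteValue.nonneg _ _
  have hPiabs : PP ≤ Complex.abs t * (2 * Complex.abs K / Complex.abs α) := by
    have h2 : Complex.abs (b (Fin.last n)) * PP = Complex.abs t * Complex.abs K := by
      rw [hPidef, ← map_prod, ← map_mul, hPi, map_mul]
    have hbpos : (0:ℝ) < Complex.abs (b (Fin.last n)) := lt_of_lt_of_le (by positivity) hlb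
    have h3 : PP = (Complex.abs t * Complex.abs K) / Complex.abs (b (Fin.last n)) := by
      field_simp
      linarith [h2]
    rw [h3]
    calc (Complex.abs t * Complex.abs K) / Complex.abs (b (Fin.last n))
        ≤ (Complex.abs t * Complex.abs K) / (Complex.abs α / 2) :=
          div_le_div_of_nonneg_left (by positivity) (by positivity) hlb
      _ = Complex.abs t * (2 * Complex.abs K / Complex.abs α) := by
          field_simp
  have key : Complex.abs (MvPolynomial.eval b D) =
      Complex.abs (b (Fin.last n)) ^ (2*n-2) *
        ∏ i, ∏ j ∈ univ.erase i, Complex.abs (x i - x j) := by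
    rw [hfeq, map_mul, map_pow]
    congr 1
    calc Complex.abs (∏ i, ∏ j ∈ univ.filter (fun j => i < j), (x i - x j)^2)
        = ∏ i, ∏ j ∈ univ.filter (fun j => i < j), (Complex.abs (x i - x j))^2 := by
          rw [map_prod]
          exact Finset.prod_congr rfl fun i _ => by
            rw [map_prod]
            exact Finset.prod_congr rfl fun j _ => map_pow _ _ _
      _ = ∏ i, ∏ j ∈ univ.erase i, Complex.abs (x i - x j) :=
          (aux_sym _ (fun i j => AbsoluteValue.map_sub _ _ _)).symm
  have hsplit1 : (∏ i, ∏ j ∈ univ.erase i, Complex.abs (x i - x j))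
      = PP * ∏ i ∈ univ.erase i₀, ∏ j ∈ univ.erase i, Complex.abs (x i - x j) := by
    rw [← Finset.mul_prod_erase univ _ (mem_univ i₀)]
    congr 1
    rw [hPidef]
    exact Finset.prod_congr rfl fun j _ => by rw [hxi₀]
  have hsplit2 : (∏ i ∈ univ.erase i₀, ∏ j ∈ univ.erase i, Complex.abs (x i - x j))
      = (∏ i ∈ univ.erase i₀, Complex.abs (x i - x₀)) *
        ∏ i ∈ univ.erase i₀, ∏ j ∈ (univ.erase i).erase i₀, Complex.abs (x i - x j) := by
    rw [← Finset.prod_mul_distrib]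
    refine Finset.prod_congr rfl fun i hi => ?_
    have hi₀mem : i₀ ∈ univ.erase i :=
      Finset.mem_erase.mpr ⟨fun h => (Finset.mem_erase.mp hi).1 h.symm, mem_univ _⟩
    rw [← Finset.mul_prod_erase (univ.erase i) _ hi₀mem, hxi₀]
  have hfirst : (∏ i ∈ univ.erase i₀, Complex.abs (x i - x₀)) = PP := by
    rw [hPidef]
    exact Finset.prod_congr rfl fun i _ => AbsoluteValue.map_sub _ _ _
  set G : ℝ := ∏ i ∈ univ.erase i₀, ∏ j ∈ (univ.erase i).erase i₀, Complex.abs (x i - x j)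
    with hGdef
  have hGn : 0 ≤ G :=
    Finset.prod_nonneg fun i _ => Finset.prod_nonneg fun j _ => AbsoluteValue.nonneg _ _
  have hGb : G ≤ (2*M)^(n*n) := by
    calc G ≤ ∏ i ∈ univ.erase i₀, (2*M)^n := by
          refine Finset.prod_le_prod (fun i _ => Finset.prod_nonneg fun j _ => AbsoluteValue.nonneg _ _) (fun i _ => ?_)
          calc (∏ j ∈ (univ.erase i).erase i₀, Complex.abs (x i - x j))
              ≤ ∏ j ∈ (univ.erase i).erase i₀, (2*M) :=
                Finset.prod_le_prod (fun j _ => AbsoluteValue.nonneg _ _) (fun j _ => hA i j)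
            _ = (2*M)^((univ.erase i).erase i₀).card := by rw [Finset.prod_const]
            _ ≤ (2*M)^n := by
                apply pow_le_pow_right₀ h2M
                calc ((univ.erase i).erase i₀).card ≤ (univ : Finset (Fin n)).card := Finset.card_le_card (subset_trans (Finset.erase_subset _ _) (Finset.erase_subset _ _))
                  _ = n := by simp
      _ = ((2*M)^n)^(univ.erase i₀).card := by rw [Finset.prod_const]
      _ ≤ ((2*M)^n)^n := by
          apply pow_le_pow_right₀ (one_le_pow₀ h2M)
          calc (univ.erase i₀).card ≤ (univ : Finset (Fin n)).card := Finset.card_le_card (Finset.erase_subset _ _)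
            _ = n := by simp
      _ = (2*M)^(n*n) := by rw [← pow_mul]
  have hble : Complex.abs (b (Fin.last n)) ≤ Λ := by
    rw [hblast, hΛ]
    refine (Complex.abs.add_le _ _).trans ?_
    gcongr
    rw [map_mul]
    exact mul_le_of_le_one_left (AbsoluteValue.nonneg _ _) ht1
  have hΛ0 : (0:ℝ) ≤ Λ := by rw [hΛ]; positivity
  rw [key, hsplit1, hsplit2, hfirst]
  clear_value q0 V K T M Λ δ b q PP G
  have htK : (0:ℝ) ≤ Complex.abs t * (2 * Complex.abs K / Complex.abs α) := by positivity
  calc Complex.abs (b (Fin.last n)) ^ (2*n-2) * (PP * (PP * G))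
      ≤ Λ^(2*n-2) * ((Complex.abs t * (2 * Complex.abs K / Complex.abs α)) *
          ((Complex.abs t * (2 * Complex.abs K / Complex.abs α)) * (2*M)^(n*n))) := by
        gcongr <;> first
          | exact hble
          | exact AbsoluteValue.nonneg _ _
          | exact hPin
          | exact hPiabs
          | exact hGn
          | exact hGb
          | exact hΛ0
          | exact pow_nonneg hΛ0 _
          | exact pow_nonneg (by linarith : (0:ℝ) ≤ 2*M) _
          | exact htK
          | positivity
    _ = Λ^(2*n-2) * (2 * Complex.abs K / Complex.abs α)^2 * (2*M)^(n*n) * (Complex.abs t)^2 := by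
        ring

lemma aux_diff {n : ℕ} (D : MvPolynomial (Fin n) ℂ) :
    Differentiable ℂ (fun z : Fin n → ℂ => MvPolynomial.eval z D) := by
  induction D using MvPolynomial.induction_on with
  | C a => simpa using differentiable_const a
  | add p q hp hq => simp only [map_add]; exact hp.add hq
  | mul_X p i hp =>
    simp only [map_mul, MvPolynomial.eval_X]; exact hp.mul (differentiable_pi.1 differentiable_id i)

lemma aux_deriv_zero {f : ℂ → ℂ} {δ C₀ : ℝ} (hδ : 0 < δ)
    (hb : ∀ t : ℂ, Complex.abs t ≤ δ → Complex.abs (f t) ≤ C₀ * (Complex.abs t)^2) :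
    f 0 = 0 ∧ HasDerivAt f 0 0 := by
  have hf0 : f 0 = 0 := by
    have h := hb 0 (by simpa using hδ.le)
    simp only [map_zero, ne_eq, OfNat.ofNat_ne_zero, not_false_eq_true, zero_pow, mul_zero] at h
    exact (AbsoluteValue.eq_zero _).mp (le_antisymm h (AbsoluteValue.nonneg _ _))
  refine ⟨hf0, ?_⟩
  rw [hasDerivAt_iff_isLittleO]
  simp only [hf0, sub_zero, smul_zero]
  have h1 : (fun t : ℂ => f t) =O[nhds 0] (fun t => t^2) := by
    rw [Asymptotics.isBigO_iff]
    refine ⟨C₀, ?_⟩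
    filter_upwards [Metric.ball_mem_nhds (0:ℂ) hδ] with t ht
    rw [Metric.mem_ball, dist_zero_right] at ht
    simpa [Complex.norm_eq_abs, map_pow] using hb t ht.le
  have h2 : (fun t : ℂ => t^2) =o[nhds 0] (fun t => t) := by
    rw [Asymptotics.isLittleO_iff]
    intro ε hε
    filter_upwards [Metric.ball_mem_nhds (0:ℂ) hε] with t ht
    rw [Metric.mem_ball, dist_zero_right] at ht
    calc ‖t^2‖ = ‖t‖ * ‖t‖ := by rw [pow_two, norm_mul]
      _ ≤ ε * ‖t‖ := by
          apply mul_le_mul_of_nonneg_right ht.le (norm_nonneg t)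
  exact h1.trans_isLittleO h2


/-- Let `p(x,y) = ∑ᵢ aᵢ(y) xⁱ` be a degree-`n` polynomial in `x` with coefficients
differentiable in `y`, and let `D` be the discriminant of a general degree-`n`
polynomial as a polynomial function of its coefficients (characterized by
`lc^(2n-2) ∏_{i<j}(xᵢ-xⱼ)²` on split polynomials), so `Dy y` is the discriminant
of `p(·,y)`.  If at `(x₀,y₀)` with `aₙ(y₀) ≠ 0` we have `p = 0`, `∂p/∂x = 0` and
`∂p/∂y = 0`, then `D(y₀) = 0` and `D'(y₀) = 0`. -/
theorem stmt_13 (n : ℕ) (a : Fin (n + 1) → ℂ → ℂ) (a' : Fin (n + 1) → ℂ)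
    (x₀ y₀ : ℂ)
    (hdiff : ∀ i, HasDerivAt (a i) (a' i) y₀)
    (hlc : a (Fin.last n) y₀ ≠ 0)
    (P : ℂ → Polynomial ℂ)
    (hP : ∀ y, P y = ∑ i : Fin (n + 1), C (a i y) * X ^ (i : ℕ))
    (hp : (P y₀).eval x₀ = 0)
    (hpx : (Polynomial.derivative (P y₀)).eval x₀ = 0)
    (hpy : ∑ i : Fin (n + 1), a' i * x₀ ^ (i : ℕ) = 0)
    (D : MvPolynomial (Fin (n + 1)) ℂ)
    (hD : ∀ (c : Fin (n + 1) → ℂ) (x : Fin n → ℂ),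
      (∑ i : Fin (n + 1), C (c i) * X ^ (i : ℕ) : Polynomial ℂ) =
          C (c (Fin.last n)) * ∏ i, (X - C (x i)) →
        MvPolynomial.eval c D =
          c (Fin.last n) ^ (2 * n - 2) *
            ∏ i : Fin n, ∏ j ∈ Finset.univ.filter (fun j => i < j), (x i - x j) ^ 2)
    (Dy : ℂ → ℂ) (hDy : ∀ y, Dy y = MvPolynomial.eval (fun i => a i y) D) :
    Dy y₀ = 0 ∧ HasDerivAt Dy 0 y₀ := by
  classical
  have hp0' : eval x₀ (∑ i : Fin (n+1), C (a i y₀) * X ^ (i:ℕ)) = 0 := by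
    rw [← hP y₀]; exact hp
  have hpx0' : eval x₀ (derivative (∑ i : Fin (n+1), C (a i y₀) * X ^ (i:ℕ))) = 0 := by
    rw [← hP y₀]; exact hpx
  have hv' : eval x₀ (∑ i : Fin (n+1), C (a' i) * X ^ (i:ℕ)) = 0 := by
    rw [eval_finset_sum]
    simpa using hpy
  obtain ⟨δ, hδpos, C₀, hC₀⟩ := aux_bound (fun i => a i y₀) a' x₀ D hD hlc hp0' hpx0' hv'
  obtain ⟨hf0, hf2⟩ := aux_deriv_zero (f := fun t : ℂ =>
    MvPolynomial.eval (fun i => a i y₀ + t * a' i) D) hδpos hC₀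
  have hFdiff := aux_diff D
  have hcurve1 : HasDerivAt (fun y => fun i : Fin (n+1) => a i y) a' y₀ :=
    hasDerivAt_pi.mpr hdiff
  set L : ℂ := fderiv ℂ (fun z : Fin (n+1) → ℂ => MvPolynomial.eval z D) (fun i => a i y₀) a'
    with hL
  have hDy1 : HasDerivAt Dy L y₀ := by
    have hDyfun : Dy = (fun z : Fin (n+1) → ℂ => MvPolynomial.eval z D) ∘
        (fun y => fun i : Fin (n+1) => a i y) := by
      funext y; exact hDy y
    rw [hDyfun]
    exact (hFdiff _).hasFDerivAt.comp_hasDerivAt y₀ hcurve1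
  have h00 : (fun i : Fin (n+1) => a i y₀ + (0:ℂ) * a' i) = fun i => a i y₀ := by
    funext i; ring
  have hcurve2 : HasDerivAt (fun t : ℂ => fun i : Fin (n+1) => a i y₀ + t * a' i) a' 0 :=
    hasDerivAt_pi.mpr fun i => by simpa using (hasDerivAt_mul_const (a' i)).const_add (a i y₀)
  have hf1 : HasDerivAt (fun t : ℂ =>
      MvPolynomial.eval (fun i => a i y₀ + t * a' i) D) L 0 := by
    have h := (hFdiff _).hasFDerivAt.comp_hasDerivAt 0 hcurve2
    rw [h00] at h
    exact h
  have hLz : L = 0 := hf1.unique hf2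
  constructor
  · rw [hDy y₀, ← h00]
    exact hf0
  · rw [hLz] at hDy1
    exact hDy1
end

section
/- Let f(x₁,…,xₙ) be a polynomial over ℂ and define p = f - v. If v is a critical value of f (i.e. there exists a point where all partial derivatives of f vanish and f takes value v), then setting p̃(x₁,…,x_{n-1}) = Disc_{xₙ}(p), the point (x₁⁰,…,x_{n-1}⁰) obtained by forgetting the last coordinate of the critical point satisfies p̃ = 0 and ∂p̃/∂xᵢ = 0 for all i = 1,…,n-1, provided the leading coefficient of p in xₙ does not vanish at that point. -/
open Polynomial Finset

section Stmt14Aux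


theorem exists_split : ∀ (k : ℕ) (R : Type) (_ : CommRing R) (_ : Nontrivial R) (m : R[X]), m.Monic → m.natDegree = k →
    ∃ (S : Type) (_ : CommRing S) (ι : R →+* S), Function.Injective ι ∧
      ∃ r : Fin k → S, m.map ι = ∏ i, (X - C (r i)) := by
  intro k
  induction k with
  | zero =>
    intro R _ _ m hm hdeg
    refine ⟨R, ‹_›, RingHom.id R, Function.injective_id, ⟨fun i => i.elim0, ?_⟩⟩
    rw [Polynomial.map_id, hm.natDegree_eq_zero.mp hdeg]
    simp
  | succ k ih =>
    intro R _ _ m hm hdeg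
    letI : CommRing (AdjoinRoot m) := inferInstance
    set ι₁ := AdjoinRoot.of m with hι₁
    have hinj₁ : Function.Injective ι₁ := by
      rw [injective_iff_map_eq_zero]
      intro x hx
      by_contra hx0
      have hdvd : m ∣ C x := AdjoinRoot.mk_eq_zero.mp hx
      exact hm.not_dvd_of_natDegree_lt (q := C x) (by simpa using hx0)
        (by simp [hdeg, natDegree_C]) hdvd
    haveI : Nontrivial (AdjoinRoot m) := hinj₁.nontrivial
    have hroot : (m.map ι₁).IsRoot (AdjoinRoot.root m) := by
      rw [IsRoot, eval_map, AdjoinRoot.eval₂_root]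
    set m₁ := (m.map ι₁) /ₘ (X - C (AdjoinRoot.root m)) with hm₁def
    have hfac : (X - C (AdjoinRoot.root m)) * m₁ = m.map ι₁ :=
      mul_divByMonic_eq_iff_isRoot.2 hroot
    have hmap_monic : (m.map ι₁).Monic := hm.map ι₁
    have hm₁monic : m₁.Monic := (monic_X_sub_C _).of_mul_monic_left (hfac ▸ hmap_monic)
    have hm₁deg : m₁.natDegree = k := by
      rw [hm₁def, natDegree_divByMonic _ (monic_X_sub_C _), natDegree_X_sub_C,
        hm.natDegree_map, hdeg]
      omega
    obtain ⟨S, instS, ι₂, hinj₂, r, hsplit⟩ := ih (AdjoinRoot m) inferInstance inferInstance m₁ hm₁monic hm₁deg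
    refine ⟨S, instS, ι₂.comp ι₁, hinj₂.comp hinj₁, Fin.cons (ι₂ (AdjoinRoot.root m)) r, ?_⟩
    rw [← Polynomial.map_map, ← hfac, Polynomial.map_mul, Polynomial.map_sub, Polynomial.map_X,
      Polynomial.map_C, hsplit, Fin.prod_univ_succ]
    simp [Fin.cons_zero, Fin.cons_succ]

lemma main_disc {d' : ℕ} (D : MvPolynomial (Fin (d'+2+1)) ℂ)
    (hstar : ∀ (S : Type) [CommRing S] (f : ℂ →+* S) (y : S) (x : Fin (d'+2) → S),
      MvPolynomial.eval₂ f
        (fun i : Fin (d'+2+1) =>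
          (Polynomial.C y * ∏ j, (Polynomial.X - Polynomial.C (x j))).coeff (i:ℕ)) D
      = y ^ (2*(d'+2)-2) *
          ∏ i : Fin (d'+2), ∏ j ∈ Finset.univ.filter (fun j => i < j), (x i - x j)^2)
    (R : Type) [CommRing R] [Algebra ℂ R] [Nontrivial R] (q : R[X]) (α : R)
    (hdeg : q.natDegree ≤ d'+2) (hu : IsUnit (q.coeff (d'+2)))
    (h0 : q.eval α = 0) (h1 : q.derivative.eval α ^ 2 = 0) :
    MvPolynomial.eval₂ (algebraMap ℂ R) (fun i : Fin (d'+2+1) => q.coeff (i:ℕ)) D = 0 := by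
  classical
  -- factor out the root α
  set g : R[X] := q /ₘ (X - C α) with hg
  have hfac : (X - C α) * g = q := mul_divByMonic_eq_iff_isRoot.2 h0
  have hqdeg : q.natDegree = d'+2 :=
    le_antisymm hdeg (le_natDegree_of_ne_zero (hu.ne_zero))
  have hgdeg : g.natDegree ≤ d'+1 := by
    rw [hg, natDegree_divByMonic _ (monic_X_sub_C α), natDegree_X_sub_C, hqdeg]
    omega
  have hgtop : g.coeff (d'+1) = q.coeff (d'+2) := by
    have hz : g.coeff (d'+1+1) = 0 := Polynomial.coeff_eq_zero_of_natDegree_lt (by omega)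
    conv_rhs => rw [← hfac]
    rw [sub_mul, Polynomial.coeff_sub, show d'+2 = d'+1+1 from rfl, Polynomial.coeff_X_mul,
      Polynomial.coeff_C_mul, hz, mul_zero, sub_zero]
  have hgu : IsUnit (g.coeff (d'+1)) := hgtop ▸ hu
  have hgα2 : g.eval α ^ 2 = 0 := by
    have hd : q.derivative = g + (X - C α) * g.derivative := by
      rw [← hfac, derivative_mul, derivative_sub, derivative_X, derivative_C, sub_zero, one_mul]
    have : q.derivative.eval α = g.eval α := by
      rw [hd]; simp
    rwa [this] at h1
  -- normalize g to a monic polynomial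
  set u : Rˣ := hgu.unit with hu'
  have hsu : (u : R) = g.coeff (d'+1) := rfl
  set m : R[X] := Polynomial.C (↑u⁻¹ : R) * g with hm'
  have hmdeg : m.natDegree ≤ d'+1 := le_trans natDegree_mul_le (by simp [natDegree_C, hgdeg])
  have hmc : m.coeff (d'+1) = 1 := by
    rw [hm', Polynomial.coeff_C_mul, ← hsu]
    exact Units.inv_mul u
  have hm : m.Monic := monic_of_natDegree_le_of_coeff_eq_one (d'+1) hmdeg hmc
  have hmdeg' : m.natDegree = d'+1 :=
    le_antisymm hmdeg (le_natDegree_of_ne_zero (by rw [hmc]; exact one_ne_zero))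
  have hgm : Polynomial.C (u : R) * m = g := by
    rw [hm', ← mul_assoc, ← Polynomial.C_mul, Units.mul_inv, Polynomial.C_1, one_mul]
  obtain ⟨S, instS, ι, hι, r, hsplit⟩ := exists_split (d'+1) R ‹_› ‹_› m hm hmdeg'
  set x : Fin (d'+2) → S := Fin.cons (ι α) r with hx
  have hsq : q.map ι = Polynomial.C (ι u) * ∏ i : Fin (d'+2), (X - C (x i)) := by
    have hrhs : (∏ i : Fin (d'+2), (X - C (x i)))
        = (X - C (ι α)) * ∏ k : Fin (d'+1), (X - C (r k)) := by
      rw [Fin.prod_univ_succ]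
      simp only [hx, Fin.cons_zero, Fin.cons_succ]
    rw [hrhs, ← hfac, ← hgm, Polynomial.map_mul, Polynomial.map_mul, Polynomial.map_sub,
      Polynomial.map_X, Polynomial.map_C, Polynomial.map_C, hsplit]
    ring
  have happ := hstar S (ι.comp (algebraMap ℂ R)) (ι u) x
  have hcoeff : (fun i : Fin (d'+2+1) =>
      (Polynomial.C (ι u) * ∏ j, (Polynomial.X - Polynomial.C (x j))).coeff (i:ℕ))
      = fun i : Fin (d'+2+1) => ι (q.coeff (i:ℕ)) := by
    funext i
    rw [← hsq, Polynomial.coeff_map]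
  rw [hcoeff] at happ
  -- the product of squared root differences vanishes
  have hgval : ι (g.eval α) = ι u * ∏ k, (ι α - r k) := by
    have h₁ : ι (g.eval α) = (g.map ι).eval (ι α) := by
      rw [eval_map, eval₂_at_apply]
    rw [h₁, ← hgm, Polynomial.map_mul, Polynomial.map_C, hsplit]
    simp [eval_prod]
  have hB2 : (∏ k, (ι α - r k)) ^ 2 = 0 := by
    have h₂ : (ι u) ^ 2 * (∏ k, (ι α - r k)) ^ 2 = 0 := by
      rw [← mul_pow, ← hgval, ← map_pow, hgα2, map_zero]
    calc (∏ k, (ι α - r k)) ^ 2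
        = (ι ↑u⁻¹) ^ 2 * ((ι u) ^ 2 * (∏ k, (ι α - r k)) ^ 2) := by
          rw [← mul_assoc, ← mul_pow, ← map_mul, Units.inv_mul, map_one, one_pow, one_mul]
      _ = 0 := by rw [h₂, mul_zero]
  have hP : (∏ i : Fin (d'+2), ∏ j ∈ Finset.univ.filter (fun j => i < j), (x i - x j)^2) = 0 := by
    rw [Fin.prod_univ_succ]
    have hfil : (Finset.univ.filter (fun j => (0 : Fin (d'+2)) < j))
        = Finset.map ⟨Fin.succ, Fin.succ_injective _⟩ Finset.univ := by
      ext j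
      simp [Fin.pos_iff_ne_zero, Fin.exists_succ_eq]
    have h0fac : (∏ j ∈ Finset.univ.filter (fun j => (0 : Fin (d'+2)) < j), (x 0 - x j)^2) = 0 := by
      rw [hfil, Finset.prod_map]
      simp only [Function.Embedding.coeFn_mk, hx, Fin.cons_zero, Fin.cons_succ]
      rw [Finset.prod_pow]
      exact hB2
    rw [h0fac, zero_mul]
  apply hι
  rw [MvPolynomial.eval₂_comp_left ι (algebraMap ℂ R) _ D, map_zero,
    show (⇑ι ∘ fun i : Fin (d'+2+1) => q.coeff (i:ℕ))
      = fun i : Fin (d'+2+1) => ι (q.coeff (i:ℕ)) from rfl, happ, hP, mul_zero]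


lemma star_transport {d : ℕ} (D : MvPolynomial (Fin (d+1)) ℂ) (S : Type) [CommRing S]
    (f : ℂ →+* S) (s : Option (Fin d) → S) :
    MvPolynomial.eval₂ f s
      (MvPolynomial.eval₂ MvPolynomial.C
        (fun i : Fin (d+1) =>
          (Polynomial.C (MvPolynomial.X none) *
            ∏ j, (Polynomial.X - Polynomial.C (MvPolynomial.X (some j)))).coeff (i:ℕ)) D)
    = MvPolynomial.eval₂ f
        (fun i : Fin (d+1) =>
          (Polynomial.C (s none) * ∏ j, (Polynomial.X - Polynomial.C (s (some j)))).coeff (i:ℕ))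
        D := by
  rw [← MvPolynomial.coe_eval₂Hom, MvPolynomial.eval₂_comp_left (MvPolynomial.eval₂Hom f s)]
  congr 1
  · exact RingHom.ext fun a => MvPolynomial.eval₂Hom_C _ _ _
  · funext i
    show (MvPolynomial.eval₂Hom f s) (Polynomial.coeff _ _) = _
    rw [← Polynomial.coeff_map]
    congr 1
    simp [Polynomial.map_mul, Polynomial.map_prod]

lemma star {d : ℕ} (D : MvPolynomial (Fin (d+1)) ℂ)
    (hD : ∀ (c : Fin (d + 1) → ℂ) (x : Fin d → ℂ),
      (∑ i : Fin (d + 1), C (c i) * X ^ (i : ℕ) : Polynomial ℂ) =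
          C (c (Fin.last d)) * ∏ i, (X - C (x i)) →
        MvPolynomial.eval c D =
          c (Fin.last d) ^ (2 * d - 2) *
            ∏ i : Fin d, ∏ j ∈ Finset.univ.filter (fun j => i < j), (x i - x j) ^ 2)
    (S : Type) [CommRing S] (f : ℂ →+* S) (y : S) (x : Fin d → S) :
    MvPolynomial.eval₂ f
      (fun i : Fin (d+1) => (Polynomial.C y * ∏ j, (Polynomial.X - Polynomial.C (x j))).coeff (i:ℕ)) D
    = y ^ (2*d-2) * ∏ i : Fin d, ∏ j ∈ Finset.univ.filter (fun j => i < j), (x i - x j)^2 := by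
  classical
  set LHSU : MvPolynomial (Option (Fin d)) ℂ :=
    MvPolynomial.eval₂ MvPolynomial.C
      (fun i : Fin (d+1) =>
        (Polynomial.C (MvPolynomial.X none) *
          ∏ j, (Polynomial.X - Polynomial.C (MvPolynomial.X (some j)))).coeff (i:ℕ)) D with hLHSU
  set RHSU : MvPolynomial (Option (Fin d)) ℂ :=
    MvPolynomial.X none ^ (2*d-2) *
      ∏ i : Fin d, ∏ j ∈ Finset.univ.filter (fun j => i < j),
        (MvPolynomial.X (some i) - MvPolynomial.X (some j))^2 with hRHSU
  have key : LHSU = RHSU := by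
    apply mul_left_cancel₀ (MvPolynomial.X_ne_zero (R := ℂ) (none : Option (Fin d)))
    apply MvPolynomial.funext
    intro c
    rw [map_mul, map_mul, MvPolynomial.eval_X]
    by_cases hy : c none = 0
    · rw [hy, zero_mul, zero_mul]
    · congr 1
      -- evaluate LHSU
      have hL : MvPolynomial.eval c LHSU =
          MvPolynomial.eval₂ (RingHom.id ℂ)
            (fun i : Fin (d+1) =>
              (Polynomial.C (c none) * ∏ j, (Polynomial.X - Polynomial.C (c (some j)))).coeff (i:ℕ)) D := by
        rw [← MvPolynomial.eval₂_id, hLHSU, star_transport]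
      -- the concrete split polynomial over ℂ
      set P : Polynomial ℂ := Polynomial.C (c none) * ∏ j, (Polynomial.X - Polynomial.C (c (some j)))
        with hP
      have hM : (∏ j : Fin d, (Polynomial.X - Polynomial.C (c (some j)))).Monic :=
        monic_prod_of_monic _ _ fun i _ => monic_X_sub_C _
      have hMdeg : (∏ j : Fin d, (Polynomial.X - Polynomial.C (c (some j)))).natDegree = d := by
        rw [natDegree_prod_of_monic _ _ fun i _ => monic_X_sub_C _]
        simp
      have hPdeg : P.natDegree ≤ d := by
        refine le_trans (natDegree_mul_le) ?_
        simp [natDegree_C, hMdeg]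
      have hMc : (∏ j : Fin d, (Polynomial.X - Polynomial.C (c (some j)))).coeff d = 1 := by
        have := hM.coeff_natDegree
        rwa [hMdeg] at this
      have hPd : P.coeff d = c none := by
        rw [hP, Polynomial.coeff_C_mul, hMc, mul_one]
      have hsum : (∑ i : Fin (d + 1), C (P.coeff (i:ℕ)) * X ^ (i : ℕ) : Polynomial ℂ) = P := by
        rw [Fin.sum_univ_eq_sum_range (fun i => C (P.coeff i) * X ^ i) (d+1)]
        simp_rw [Polynomial.C_mul_X_pow_eq_monomial]
        exact (P.as_sum_range' (d+1) (lt_of_le_of_lt hPdeg (lt_add_one d))).symm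
      have hhyp : (∑ i : Fin (d + 1), C (P.coeff (i:ℕ)) * X ^ (i : ℕ) : Polynomial ℂ) =
          C (P.coeff ((Fin.last d : Fin (d+1)) : ℕ)) * ∏ i, (X - C (c (some i))) := by
        rw [hsum, Fin.val_last, hPd, hP]
      have happ := hD (fun i : Fin (d+1) => P.coeff (i:ℕ)) (fun j => c (some j)) hhyp
      rw [hL, MvPolynomial.eval₂_id, happ]
      simp only [Fin.val_last, hPd, hRHSU, map_mul, map_pow, map_prod, map_sub,
        MvPolynomial.eval_X]
  -- now transport along (f, s)
  set s : Option (Fin d) → S := fun o => o.elim y x with hs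
  have h1 : MvPolynomial.eval₂ f s LHSU =
      MvPolynomial.eval₂ f
        (fun i : Fin (d+1) =>
          (Polynomial.C y * ∏ j, (Polynomial.X - Polynomial.C (x j))).coeff (i:ℕ)) D := by
    rw [hLHSU, star_transport]
    rfl
  have h2 : MvPolynomial.eval₂ f s RHSU =
      y ^ (2*d-2) * ∏ i : Fin d, ∏ j ∈ Finset.univ.filter (fun j => i < j), (x i - x j)^2 := by
    rw [hRHSU, ← MvPolynomial.coe_eval₂Hom]
    simp only [map_mul, map_pow, map_prod, map_sub, MvPolynomial.eval₂Hom_X']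
    rfl
  rw [← h1, key, h2]


section
open TrivSqZeroExt

lemma taylor_dual {σ : Type*} [DecidableEq σ] (a : σ → ℂ) (i : σ) (u : MvPolynomial σ ℂ) :
    MvPolynomial.aeval
      (fun j => (inl (a j) + inr (if j = i then 1 else 0) : DualNumber ℂ)) u
    = inl (MvPolynomial.eval a u)
      + inr (MvPolynomial.eval a (MvPolynomial.pderiv i u)) := by
  induction u using MvPolynomial.induction_on with
  | C c =>
    simp only [MvPolynomial.aeval_C, MvPolynomial.eval_C, map_zero, MvPolynomial.pderiv_C]
    rw [TrivSqZeroExt.inr_zero, add_zero]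
    rfl
  | add p q hp hq =>
    simp only [map_add, hp, hq, TrivSqZeroExt.inl_add, TrivSqZeroExt.inr_add]
    abel
  | mul_X p j hp =>
    rw [map_mul, hp, MvPolynomial.aeval_X]
    ext
    · simp only [TrivSqZeroExt.fst_mul, TrivSqZeroExt.fst_add, TrivSqZeroExt.fst_inl,
        TrivSqZeroExt.fst_inr, add_zero, MvPolynomial.eval_mul, MvPolynomial.eval_X]
    · simp only [TrivSqZeroExt.snd_mul, TrivSqZeroExt.fst_add, TrivSqZeroExt.snd_add,
        TrivSqZeroExt.fst_inl, TrivSqZeroExt.snd_inl, TrivSqZeroExt.fst_inr,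
        TrivSqZeroExt.snd_inr, zero_add, add_zero, smul_eq_mul, MulOpposite.smul_eq_mul_unop,
        MulOpposite.unop_op, MvPolynomial.pderiv_mul, map_add,
        MvPolynomial.eval_X, MvPolynomial.eval_mul, MvPolynomial.eval_add]
      by_cases h : j = i
      · subst h
        rw [if_pos rfl, MvPolynomial.pderiv_X_self]
        simp only [map_one, mul_one]
        ring
      · rw [if_neg h, MvPolynomial.pderiv_X_of_ne h]
        simp only [map_zero, mul_zero, add_zero, zero_add]

end

lemma derivative_finSuccEquiv {n : ℕ} (g : MvPolynomial (Fin (n+1)) ℂ) :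
    Polynomial.derivative (MvPolynomial.finSuccEquiv ℂ n g)
      = MvPolynomial.finSuccEquiv ℂ n (MvPolynomial.pderiv 0 g) := by
  induction g using MvPolynomial.induction_on with
  | C c =>
    rw [MvPolynomial.pderiv_C, map_zero]
    rw [show (MvPolynomial.finSuccEquiv ℂ n) (MvPolynomial.C c)
        = Polynomial.C (MvPolynomial.C c) from by
      simp [MvPolynomial.finSuccEquiv_apply]]
    exact derivative_C
  | add p q hp hq => rw [map_add, derivative_add, hp, hq, map_add, map_add]
  | mul_X p j hp =>
    rw [map_mul, derivative_mul, hp, MvPolynomial.pderiv_mul, map_add, map_mul, map_mul]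
    cases j using Fin.cases with
    | zero =>
      rw [MvPolynomial.finSuccEquiv_X_zero, MvPolynomial.pderiv_X_self, derivative_X, map_one,
        mul_one]
    | succ k =>
      rw [MvPolynomial.finSuccEquiv_X_succ, derivative_C, mul_zero,
        MvPolynomial.pderiv_X_of_ne (Fin.succ_ne_zero k), map_zero, mul_zero]

lemma bridge {n : ℕ} (T : Type*) [CommRing T] [Algebra ℂ T] (c : Fin n → T) (β : T)
    (g : MvPolynomial (Fin (n+1)) ℂ) :
    Polynomial.eval₂ (MvPolynomial.aeval c).toRingHom β
      (MvPolynomial.finSuccEquiv ℂ n (MvPolynomial.rename (⇑(finRotate (n+1))) g))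
    = MvPolynomial.aeval (Fin.snoc c β) g := by
  set L : MvPolynomial (Fin (n+1)) ℂ →ₐ[ℂ] T :=
    (Polynomial.eval₂AlgHom (MvPolynomial.aeval c) β (fun a => Commute.all _ _)).comp
      ((MvPolynomial.finSuccEquiv ℂ n).toAlgHom.comp
        (MvPolynomial.rename (⇑(finRotate (n+1))))) with hL
  have hkey : L = MvPolynomial.aeval (Fin.snoc c β) := by
    apply MvPolynomial.algHom_ext
    intro k
    induction k using Fin.lastCases with
    | last =>
      simp only [hL, AlgHom.coe_comp, Function.comp_apply, MvPolynomial.rename_X,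
        AlgEquiv.toAlgHom_eq_coe, AlgHom.coe_coe, AlgEquiv.coe_toAlgHom, finRotate_last,
        MvPolynomial.finSuccEquiv_X_zero, MvPolynomial.aeval_X, Fin.snoc_last,
        Polynomial.eval₂AlgHom_apply, Polynomial.eval₂_X]
    | cast j =>
      have hrot : finRotate (n+1) (Fin.castSucc j) = j.succ := by
        rw [finRotate_succ_apply, Fin.coeSucc_eq_succ]
      simp only [hL, AlgHom.coe_comp, Function.comp_apply, MvPolynomial.rename_X,
        AlgEquiv.toAlgHom_eq_coe, AlgHom.coe_coe, AlgEquiv.coe_toAlgHom, hrot,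
        MvPolynomial.finSuccEquiv_X_succ, MvPolynomial.aeval_X, Fin.snoc_castSucc,
        Polynomial.eval₂AlgHom_apply, Polynomial.eval₂_C]
      exact MvPolynomial.aeval_X c j
  have : L g = MvPolynomial.aeval (Fin.snoc c β) g := by rw [hkey]
  simpa only [hL, AlgHom.coe_comp, Function.comp_apply, AlgEquiv.toAlgHom_eq_coe,
    AlgHom.coe_coe, AlgEquiv.coe_toAlgHom, AlgHom.toRingHom_eq_coe, Polynomial.eval₂AlgHom_apply] using this


end Stmt14Aux

/-- Let `f` be a polynomial in `n+1` variables over ℂ, `v` a critical value of `f`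
attained at the critical point `a`, and `p = f - v`.  Separate the last variable:
`Q` is `p` viewed as a univariate polynomial (of degree `d`) in the last variable
with coefficients polynomials in the remaining variables, and let
`p̃ = Disc_{xₙ}(p)` be obtained by substituting the coefficients of `Q` into the
universal degree-`d` discriminant `D`.  If the leading coefficient of `p` in the
last variable does not vanish at `b` (the critical point with its last coordinate
forgotten), then `p̃(b) = 0` and `∂p̃/∂xᵢ (b) = 0` for all `i`. -/
theorem stmt_14 (n d : ℕ) (f : MvPolynomial (Fin (n + 1)) ℂ) (v : ℂ)
    (a : Fin (n + 1) → ℂ)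
    (hcrit : ∀ i : Fin (n + 1), MvPolynomial.eval a (MvPolynomial.pderiv i f) = 0)
    (hv : MvPolynomial.eval a f = v)
    (p : MvPolynomial (Fin (n + 1)) ℂ) (hpdef : p = f - MvPolynomial.C v)
    (Q : Polynomial (MvPolynomial (Fin n) ℂ))
    (hQ : Q = MvPolynomial.finSuccEquiv ℂ n (MvPolynomial.rename (⇑(finRotate (n + 1))) p))
    (hQd : Q.natDegree = d)
    (D : MvPolynomial (Fin (d + 1)) ℂ)
    (hD : ∀ (c : Fin (d + 1) → ℂ) (x : Fin d → ℂ),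
      (∑ i : Fin (d + 1), C (c i) * X ^ (i : ℕ) : Polynomial ℂ) =
          C (c (Fin.last d)) * ∏ i, (X - C (x i)) →
        MvPolynomial.eval c D =
          c (Fin.last d) ^ (2 * d - 2) *
            ∏ i : Fin d, ∏ j ∈ Finset.univ.filter (fun j => i < j), (x i - x j) ^ 2)
    (ptilde : MvPolynomial (Fin n) ℂ)
    (hptilde : ptilde = MvPolynomial.aeval (fun i : Fin (d + 1) => Q.coeff (i : ℕ)) D)
    (b : Fin n → ℂ) (hb : b = fun i : Fin n => a i.castSucc)
    (hlc : MvPolynomial.eval b (Q.coeff d) ≠ 0) :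
    MvPolynomial.eval b ptilde = 0 ∧
      ∀ i : Fin n, MvPolynomial.eval b (MvPolynomial.pderiv i ptilde) = 0 := by
  classical
  subst hpdef
  subst hptilde
  set aN := a (Fin.last n) with haN
  have haev : ∀ {σ : Type} (c : σ → ℂ) (u : MvPolynomial σ ℂ),
      MvPolynomial.aeval c u = MvPolynomial.eval c u := by
    intro σ c u
    rw [MvPolynomial.aeval_def, Algebra.algebraMap_self, MvPolynomial.eval₂_id]
  have ha : (Fin.snoc b aN : Fin (n+1) → ℂ) = a := by
    funext k
    induction k using Fin.lastCases with
    | last => rw [Fin.snoc_last]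
    | cast j => rw [Fin.snoc_castSucc, hb]
  have hpa : MvPolynomial.eval a (f - MvPolynomial.C v) = 0 := by
    rw [map_sub, hv, MvPolynomial.eval_C, sub_self]
  have hpd : ∀ k, MvPolynomial.eval a (MvPolynomial.pderiv k (f - MvPolynomial.C v)) = 0 := by
    intro k
    rw [map_sub, MvPolynomial.pderiv_C, sub_zero, hcrit k]
  have hhom : (MvPolynomial.aeval b).toRingHom = (MvPolynomial.eval b) :=
    RingHom.ext fun u => haev b u
  have hderQ : Polynomial.derivative Q
      = MvPolynomial.finSuccEquiv ℂ n
          (MvPolynomial.rename (⇑(finRotate (n+1)))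
            (MvPolynomial.pderiv (Fin.last n) (f - MvPolynomial.C v))) := by
    have h2 := MvPolynomial.pderiv_rename
      (f := ⇑(finRotate (n+1))) (Equiv.injective _) (Fin.last n) (f - MvPolynomial.C v)
    rw [finRotate_last] at h2
    rw [hQ, derivative_finSuccEquiv, h2]
  -- the specialized univariate polynomial over ℂ
  set q₀ : Polynomial ℂ := Q.map (MvPolynomial.eval b) with hq₀
  have h00 : q₀.eval aN = 0 := by
    have hB := bridge ℂ b aN (f - MvPolynomial.C v)
    rw [ha, haev, hpa] at hB
    rw [hq₀, Polynomial.eval_map, ← hhom, hQ]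
    exact hB
  have h0d : q₀.derivative.eval aN = 0 := by
    have hB := bridge ℂ b aN (MvPolynomial.pderiv (Fin.last n) (f - MvPolynomial.C v))
    rw [ha, haev, hpd] at hB
    rw [hq₀, Polynomial.derivative_map, Polynomial.eval_map, ← hhom, hderQ]
    exact hB
  have hc₀ : q₀.coeff d = MvPolynomial.eval b (Q.coeff d) := Polynomial.coeff_map _ _
  have hq₀ne : q₀ ≠ 0 := fun h => hlc (by rw [← hc₀, h, Polynomial.coeff_zero])
  -- d ≥ 2
  have hd2 : 2 ≤ d := by
    obtain ⟨g₁, hg₁⟩ := Polynomial.dvd_iff_isRoot.mpr h00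
    have hg₁α : g₁.eval aN = 0 := by
      have : q₀.derivative = g₁ + (X - C aN) * g₁.derivative := by
        rw [hg₁, derivative_mul, derivative_sub, derivative_X, derivative_C, sub_zero, one_mul]
      have := congrArg (Polynomial.eval aN) this
      rw [h0d] at this
      simpa using this.symm
    obtain ⟨g₂, hg₂⟩ := Polynomial.dvd_iff_isRoot.mpr hg₁α
    have hfac2 : q₀ = (X - C aN)^2 * g₂ := by rw [hg₁, hg₂]; ring
    have hg₂ne : g₂ ≠ 0 := by
      intro h; rw [h, mul_zero] at hfac2; exact hq₀ne hfac2
    have : q₀.natDegree = 2 + g₂.natDegree := by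
      rw [hfac2, natDegree_mul (pow_ne_zero _ (X_sub_C_ne_zero aN)) hg₂ne,
        natDegree_pow, natDegree_X_sub_C, mul_one]
    have hle : q₀.natDegree ≤ d := hQd ▸ Polynomial.natDegree_map_le
    omega
  obtain ⟨d', rfl⟩ : ∃ d', d = d' + 2 := ⟨d - 2, by omega⟩
  have hstar := star D hD
  -- Part 1
  have hdeg₀ : q₀.natDegree ≤ d' + 2 := hQd ▸ Polynomial.natDegree_map_le
  have hu₀ : IsUnit (q₀.coeff (d' + 2)) :=
    isUnit_iff_ne_zero.mpr (by rw [hc₀]; exact hlc)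
  have h1₀ : q₀.derivative.eval aN ^ 2 = 0 := by rw [h0d]; ring
  have hmain₀ := main_disc D hstar ℂ q₀ aN hdeg₀ hu₀ h00 h1₀
  have hcomp₀ : MvPolynomial.eval b
      (MvPolynomial.aeval (fun i : Fin (d' + 2 + 1) => Q.coeff (i : ℕ)) D)
      = MvPolynomial.eval₂ (algebraMap ℂ ℂ) (fun i : Fin (d' + 2 + 1) => q₀.coeff (i : ℕ)) D := by
    rw [MvPolynomial.aeval_def, MvPolynomial.algebraMap_eq,
      MvPolynomial.eval₂_comp_left (MvPolynomial.eval b) MvPolynomial.C _ D]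
    congr 1
    · exact RingHom.ext fun r => by
        rw [RingHom.comp_apply, MvPolynomial.eval_C, Algebra.algebraMap_self, RingHom.id_apply]
    · funext i
      exact (Polynomial.coeff_map _ _).symm
  constructor
  · rw [hcomp₀, hmain₀]
  -- Part 2
  intro i
  set R := DualNumber ℂ
  haveI : Nontrivial R := TrivSqZeroExt.inl_injective.nontrivial
  set pt : Fin n → R :=
    fun j => (TrivSqZeroExt.inl (b j) + TrivSqZeroExt.inr (if j = i then 1 else 0)) with hpt
  have htay : ∀ u : MvPolynomial (Fin n) ℂ,
      (MvPolynomial.aeval pt) u = TrivSqZeroExt.inl (MvPolynomial.eval b u)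
        + TrivSqZeroExt.inr (MvPolynomial.eval b (MvPolynomial.pderiv i u)) :=
    fun u => taylor_dual b i u
  set qR : Polynomial R := Q.map (MvPolynomial.aeval pt).toRingHom with hqR
  have hsn : (Fin.snoc pt (TrivSqZeroExt.inl aN) : Fin (n+1) → R)
      = fun k => TrivSqZeroExt.inl (a k)
          + TrivSqZeroExt.inr (if k = Fin.castSucc i then 1 else 0) := by
    funext k
    induction k using Fin.lastCases with
    | last =>
      rw [Fin.snoc_last, if_neg (Fin.castSucc_lt_last i).ne', TrivSqZeroExt.inr_zero, add_zero]
    | cast j =>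
      rw [Fin.snoc_castSucc, hpt]
      have : (j = i) = (Fin.castSucc j = Fin.castSucc i) := by
        simp [Fin.castSucc_inj]
      rw [hb]
      simp only [this]
  have h0R : qR.eval (TrivSqZeroExt.inl aN) = 0 := by
    have hB := bridge R pt (TrivSqZeroExt.inl aN) (f - MvPolynomial.C v)
    rw [hsn, taylor_dual a (Fin.castSucc i) (f - MvPolynomial.C v), hpa, hpd,
      TrivSqZeroExt.inl_zero, TrivSqZeroExt.inr_zero, add_zero] at hB
    rw [hqR, Polynomial.eval_map, hQ]
    exact hB
  have h1R : qR.derivative.eval (TrivSqZeroExt.inl aN) ^ 2 = 0 := by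
    have hB := bridge R pt (TrivSqZeroExt.inl aN)
      (MvPolynomial.pderiv (Fin.last n) (f - MvPolynomial.C v))
    rw [hsn, taylor_dual a (Fin.castSucc i)
        (MvPolynomial.pderiv (Fin.last n) (f - MvPolynomial.C v)),
      hpd, TrivSqZeroExt.inl_zero, zero_add] at hB
    rw [hqR, Polynomial.derivative_map, Polynomial.eval_map, hderQ, hB, sq,
      TrivSqZeroExt.inr_mul_inr]
  have huR : IsUnit (qR.coeff (d' + 2)) := by
    rw [hqR, Polynomial.coeff_map]
    rw [TrivSqZeroExt.isUnit_iff_isUnit_fst]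
    rw [show ((MvPolynomial.aeval pt).toRingHom (Q.coeff (d' + 2)))
      = (MvPolynomial.aeval pt) (Q.coeff (d' + 2)) from rfl, htay]
    rw [TrivSqZeroExt.fst_add, TrivSqZeroExt.fst_inl, TrivSqZeroExt.fst_inr, add_zero]
    exact isUnit_iff_ne_zero.mpr hlc
  have hdegR : qR.natDegree ≤ d' + 2 := hQd ▸ Polynomial.natDegree_map_le
  have hmainR := main_disc D hstar R qR (TrivSqZeroExt.inl aN) hdegR huR h0R h1R
  have hcompR : (MvPolynomial.aeval pt)
        (MvPolynomial.aeval (fun k : Fin (d' + 2 + 1) => Q.coeff (k : ℕ)) D)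
      = MvPolynomial.eval₂ (algebraMap ℂ R) (fun k : Fin (d' + 2 + 1) => qR.coeff (k : ℕ)) D := by
    rw [show (MvPolynomial.aeval (fun k : Fin (d' + 2 + 1) => Q.coeff (k : ℕ)) D
          : MvPolynomial (Fin n) ℂ)
        = MvPolynomial.eval₂ MvPolynomial.C (fun k : Fin (d' + 2 + 1) => Q.coeff (k : ℕ)) D from by
      rw [MvPolynomial.aeval_def, MvPolynomial.algebraMap_eq]]
    rw [show ((MvPolynomial.aeval pt) (MvPolynomial.eval₂ MvPolynomial.C
          (fun k : Fin (d' + 2 + 1) => Q.coeff (k : ℕ)) D))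
        = (MvPolynomial.aeval pt).toRingHom (MvPolynomial.eval₂ MvPolynomial.C
          (fun k : Fin (d' + 2 + 1) => Q.coeff (k : ℕ)) D) from rfl,
      MvPolynomial.eval₂_comp_left (MvPolynomial.aeval pt).toRingHom MvPolynomial.C _ D]
    congr 1
    · refine RingHom.ext fun r => ?_
      rw [RingHom.comp_apply]
      show (MvPolynomial.aeval pt) (MvPolynomial.C r) = algebraMap ℂ R r
      rw [← MvPolynomial.algebraMap_eq, AlgHom.commutes]
    · funext k
      exact (Polynomial.coeff_map _ _).symm
  have hfin : (MvPolynomial.aeval pt)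
      (MvPolynomial.aeval (fun k : Fin (d' + 2 + 1) => Q.coeff (k : ℕ)) D) = 0 := by
    rw [hcompR, hmainR]
  rw [htay] at hfin
  have hsnd := congrArg TrivSqZeroExt.snd hfin
  rw [TrivSqZeroExt.snd_add, TrivSqZeroExt.snd_inl, TrivSqZeroExt.snd_inr, zero_add,
    TrivSqZeroExt.snd_zero] at hsnd
  exact hsnd
end
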